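/- Let A be a set of k ≥ 2 positive integers and let H be a set of r ≥ 2 positive integers with maximum element h_r. If |HA| = h_r(k−1) + r, then H is an arithmetic progression with some common difference d, and A is an arithmetic progression with common difference d·min(A). -/

import Mathlib

open Finset Pointwise

/-- `itSum h A` is the sumset `hA`: integers expressible as a sum of `h` elements
of `A` (repetitions allowed); `0A = {0}`. -/
def itSum : ℕ → Finset ℤ → Finset ℤ
  | 0, _ => {0}
  | n + 1, A => A + itSum n A

/-- `sumsetH H A = ⋃ h ∈ H, hA`. -/
def sumsetH (H : Finset ℕ) (A : Finset ℤ) : Finset ℤ :=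
  H.biUnion fun h => itSum h A

/-- `rSum h A` is the restricted sumset `h^A`: integers expressible as a sum of `h`
pairwise distinct elements of `A`; `0^A = {0}`. -/
def rSum (h : ℕ) (A : Finset ℤ) : Finset ℤ :=
  (A.powersetCard h).image fun B => B.sum id

/-- `rSumH H A = ⋃ h ∈ H, h^A`. -/
def rSumH (H : Finset ℕ) (A : Finset ℤ) : Finset ℤ :=
  H.biUnion fun h => rSum h A

/-- A finite set of naturals is an arithmetic progression with common difference `d`. -/
def IsAPNat (S : Finset ℕ) (d : ℕ) : Prop :=
  ∃ a : ℕ, S = (Finset.range S.card).image fun i => a + i * d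

/-- A finite set of integers is an arithmetic progression with common difference `d`. -/
def IsAPInt (S : Finset ℤ) (d : ℤ) : Prop :=
  ∃ a : ℤ, S = (Finset.range S.card).image fun i : ℕ => a + (i : ℤ) * d

namespace SCI

def apInt (a d : ℤ) (n : ℕ) : Finset ℤ :=
  (Finset.range n).image fun i : ℕ => a + (i : ℤ) * d

lemma mem_apInt {a d x : ℤ} {n : ℕ} :
    x ∈ apInt a d n ↔ ∃ i : ℕ, i < n ∧ x = a + (i : ℤ) * d := by
  simp [apInt, Finset.mem_image, Finset.mem_range, eq_comm]

lemma card_apInt {a d : ℤ} (hd : d ≠ 0) (n : ℕ) : (apInt a d n).card = n := by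
  rw [apInt, Finset.card_image_of_injective _ ?_, Finset.card_range]
  intro i j hij
  have h2 : (i : ℤ) * d = (j : ℤ) * d := add_left_cancel hij
  exact_mod_cast mul_right_cancel₀ hd h2

lemma apInt_add_apInt {a b d : ℤ} {n l : ℕ} (hn : 1 ≤ n) (hl : 1 ≤ l) :
    apInt a d n + apInt b d l = apInt (a + b) d (n + l - 1) := by
  ext x
  simp only [Finset.mem_add, mem_apInt]
  constructor
  · rintro ⟨y, ⟨i, hi, rfl⟩, z, ⟨j, hj, rfl⟩, rfl⟩
    exact ⟨i + j, by omega, by push_cast; ring⟩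
  · rintro ⟨i, hi, rfl⟩
    obtain ⟨i1, i2, h1, h2, h3⟩ : ∃ i1 i2, i1 < n ∧ i2 < l ∧ i1 + i2 = i :=
      ⟨min i (n-1), i - min i (n-1), by omega, by omega, by omega⟩
    refine ⟨a + (i1 : ℤ) * d, ⟨i1, h1, rfl⟩, b + (i2 : ℤ) * d, ⟨i2, h2, rfl⟩, ?_⟩
    have h4 : (i : ℤ) = (i1 : ℤ) + (i2 : ℤ) := by omega
    rw [h4]; ring

lemma itSum_succ (h : ℕ) (A : Finset ℤ) : itSum (h + 1) A = A + itSum h A := rfl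

lemma itSum_apInt {a d : ℤ} {n : ℕ} (hn : 1 ≤ n) :
    ∀ h : ℕ, itSum h (apInt a d n) = apInt ((h : ℤ) * a) d (h * (n - 1) + 1) := by
  intro h
  induction h with
  | zero =>
      ext x
      simp [itSum, mem_apInt]
  | succ h ih =>
      rw [itSum_succ, ih, apInt_add_apInt hn (by omega)]
      have hcount : n + (h * (n - 1) + 1) - 1 = (h + 1) * (n - 1) + 1 := by
        have : (h + 1) * (n - 1) = h * (n - 1) + (n - 1) := by ring
        omega
      rw [hcount]
      congr 1
      push_cast; ring

lemma itSum_nonempty {A : Finset ℤ} (hA : A.Nonempty) : ∀ h, (itSum h A).Nonempty := by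
  intro h
  induction h with
  | zero => exact ⟨0, by simp [itSum]⟩
  | succ h ih => exact hA.add ih

lemma nsmul_mem_itSum {A : Finset ℤ} {a : ℤ} (ha : a ∈ A) :
    ∀ h : ℕ, (h : ℤ) * a ∈ itSum h A := by
  intro h
  induction h with
  | zero => simp [itSum]
  | succ h ih =>
      have : ((h : ℤ) + 1) * a = a + (h : ℤ) * a := by ring
      rw [itSum_succ]
      push_cast
      rw [this]
      exact Finset.add_mem_add ha ih

lemma le_of_mem_itSum {A : Finset ℤ} (hA : A.Nonempty) :
    ∀ h, ∀ x ∈ itSum h A, (h : ℤ) * A.min' hA ≤ x := by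
  intro h
  induction h with
  | zero => intro x hx; simp only [itSum, Finset.mem_singleton] at hx; simp [hx]
  | succ h ih =>
      intro x hx
      rw [itSum_succ, Finset.mem_add] at hx
      obtain ⟨y, hy, z, hz, rfl⟩ := hx
      have h1 := A.min'_le y hy
      have h2 := ih z hz
      push_cast
      nlinarith [h1, h2]

lemma card_add_card_le {A B : Finset ℤ} (hA : A.Nonempty) (hB : B.Nonempty) :
    A.card + B.card ≤ (A + B).card + 1 := by
  set C1 := B.image (fun b => A.min' hA + b) with hC1
  set C2 := A.image (fun x => x + B.max' hB) with hC2
  have hsub : C1 ∪ C2 ⊆ A + B := by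
    intro x hx
    rcases Finset.mem_union.mp hx with hx | hx
    · obtain ⟨b, hb, rfl⟩ := Finset.mem_image.mp hx
      exact Finset.add_mem_add (A.min'_mem hA) hb
    · obtain ⟨a, ha, rfl⟩ := Finset.mem_image.mp hx
      exact Finset.add_mem_add ha (B.max'_mem hB)
  have hc1 : C1.card = B.card := Finset.card_image_of_injective _ (add_right_injective _)
  have hc2 : C2.card = A.card := Finset.card_image_of_injective _ (add_left_injective _)
  have hint : (C1 ∩ C2).card ≤ 1 := by
    apply Finset.card_le_one.mpr
    intro x hx y hy
    have hxx : x = A.min' hA + B.max' hB := by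
      obtain ⟨hx1, hx2⟩ := Finset.mem_inter.mp hx
      obtain ⟨b, hb, rfl⟩ := Finset.mem_image.mp hx1
      obtain ⟨a, ha, heq⟩ := Finset.mem_image.mp hx2
      have h1 := B.le_max' b hb
      have h2 := A.min'_le a ha
      have : a + B.max' hB ≤ A.min' hA + b := by rw [heq]
      omega
    have hyy : y = A.min' hA + B.max' hB := by
      obtain ⟨hy1, hy2⟩ := Finset.mem_inter.mp hy
      obtain ⟨b, hb, rfl⟩ := Finset.mem_image.mp hy1
      obtain ⟨a, ha, heq⟩ := Finset.mem_image.mp hy2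
      have h1 := B.le_max' b hb
      have h2 := A.min'_le a ha
      have : a + B.max' hB ≤ A.min' hA + b := by rw [heq]
      omega
    rw [hxx, hyy]
  have hu := Finset.card_union_add_card_inter C1 C2
  have := Finset.card_le_card hsub
  omega


lemma ap_of_step : ∀ (n : ℕ) (A : Finset ℤ) (hA : A.Nonempty) (d : ℤ), 0 < d →
    A.card = n → (∀ x ∈ A, x ≠ A.min' hA → x - d ∈ A) →
    A = apInt (A.min' hA) d n := by
  intro n
  induction n with
  | zero => intro A hA d _ hcard _; simp [Finset.card_eq_zero.mp hcard] at hA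
  | succ m IH =>
      intro A hA d hd hcard hstep
      rcases Nat.eq_zero_or_pos m with hm | hm
      · subst hm
        obtain ⟨x, hx⟩ := Finset.card_eq_one.mp hcard
        subst hx
        ext y
        simp [mem_apInt, Finset.min'_singleton]
      · -- m ≥ 1, card A = m+1 ≥ 2
        have hcard2 : 1 < A.card := by omega
        set mn := A.min' hA with hmn
        set mx := A.max' hA with hmx
        have hlt : mn < mx := Finset.min'_lt_max'_of_card A hcard2
        set A' := A.erase mx with hA'
        have hmxA : mx ∈ A := A.max'_mem hA
        have hcard' : A'.card = m := by rw [hA', Finset.card_erase_of_mem hmxA, hcard]; omega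
        have hA'ne : A'.Nonempty := Finset.card_pos.mp (by omega)
        have hmnA' : mn ∈ A' := Finset.mem_erase.mpr ⟨ne_of_lt hlt, A.min'_mem hA⟩
        have hmin' : A'.min' hA'ne = mn := by
          apply le_antisymm (Finset.min'_le _ _ hmnA')
          exact Finset.le_min' _ _ _ fun y hy => A.min'_le y (Finset.mem_of_mem_erase hy)
        have hstep' : ∀ x ∈ A', x ≠ A'.min' hA'ne → x - d ∈ A' := by
          intro x hx hne
          rw [hmin'] at hne
          have hxA : x ∈ A := Finset.mem_of_mem_erase hx
          have h1 : x - d ∈ A := hstep x hxA hne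
          have hxle : x ≤ mx := A.le_max' x hxA
          exact Finset.mem_erase.mpr ⟨by omega, h1⟩
        have hAP' : A' = apInt mn d m := by
          have := IH A' hA'ne d hd hcard' hstep'
          rwa [hmin'] at this
        -- analyze mx
        have hmx1 : mx - d ∈ A := hstep mx hmxA (ne_of_gt hlt)
        have hmx2 : mx - d ∈ A' := Finset.mem_erase.mpr ⟨by omega, hmx1⟩
        rw [hAP', mem_apInt] at hmx2
        obtain ⟨j, hj, hjeq⟩ := hmx2
        have htop : mn + ((m - 1 : ℕ) : ℤ) * d ∈ A' := by
          rw [hAP', mem_apInt]; exact ⟨m - 1, by omega, rfl⟩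
        have htopA : mn + ((m - 1 : ℕ) : ℤ) * d ∈ A := Finset.mem_of_mem_erase htop
        have htopne : mn + ((m - 1 : ℕ) : ℤ) * d ≠ mx := by
          intro hcon
          rw [← hcon] at hmxA
          exact (Finset.mem_erase.mp htop).1 hcon
        have htoplt : mn + ((m - 1 : ℕ) : ℤ) * d < mx :=
          lt_of_le_of_ne (A.le_max' _ htopA) htopne
        have hjm : j = m - 1 := by
          have h1 : ((m - 1 : ℕ) : ℤ) * d < (j : ℤ) * d + d := by omega
          have h2 : ((m - 1 : ℕ) : ℤ) < (j : ℤ) + 1 := by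
            nlinarith
          omega
        have hmxval : mx = mn + (m : ℤ) * d := by
          subst hjm
          have : ((m - 1 : ℕ) : ℤ) = (m : ℤ) - 1 := by omega
          rw [this] at hjeq
          linarith
        have hins : A = insert mx A' := (Finset.insert_erase hmxA).symm
        rw [hins]
        ext x
        rw [Finset.mem_insert, hAP', mem_apInt, mem_apInt]
        constructor
        · rintro (rfl | ⟨i, hi, rfl⟩)
          · exact ⟨m, by omega, by rw [hmxval]⟩
          · exact ⟨i, by omega, rfl⟩
        · rintro ⟨i, hi, rfl⟩
          rcases Nat.lt_or_ge i m with h | h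
          · exact Or.inr ⟨i, h, rfl⟩
          · have : i = m := by omega
            subst this
            exact Or.inl (by rw [hmxval])

lemma pair_eq : ∀ (n : ℕ) (A B : Finset ℤ) (hA2 : 2 ≤ A.card) (hB2 : 2 ≤ B.card),
    B.card = n → (A + B).card + 1 = A.card + B.card →
    ∃ d : ℤ, 0 < d ∧ A = apInt (A.min' (Finset.card_pos.mp (by omega))) d A.card ∧
      B = apInt (B.min' (Finset.card_pos.mp (by omega))) d B.card := by
  intro n
  induction n using Nat.strong_induction_on with
  | _ n IH =>
  intro A B hA2 hB2 hBn heq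
  have hAne : A.Nonempty := Finset.card_pos.mp (by omega)
  have hBne : B.Nonempty := Finset.card_pos.mp (by omega)
  rcases Nat.lt_or_ge n 3 with hn3 | hn3
  · -- base case n = 2
    have hn2 : n = 2 := by omega
    set b1 := B.min' hBne with hb1
    set b2 := B.max' hBne with hb2
    have hblt : b1 < b2 := Finset.min'_lt_max'_of_card B (by omega)
    set d := b2 - b1 with hdd
    have hd : 0 < d := by omega
    set C1 := A.image (fun x => x + b1) with hC1
    set C2 := A.image (fun x => x + b2) with hC2
    have hsub : C1 ∪ C2 ⊆ A + B := by
      intro x hx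
      rcases Finset.mem_union.mp hx with hx | hx
      · obtain ⟨a, ha, rfl⟩ := Finset.mem_image.mp hx
        exact Finset.add_mem_add ha (B.min'_mem hBne)
      · obtain ⟨a, ha, rfl⟩ := Finset.mem_image.mp hx
        exact Finset.add_mem_add ha (B.max'_mem hBne)
    have hc1 : C1.card = A.card := Finset.card_image_of_injective _ (add_left_injective _)
    have hc2 : C2.card = A.card := Finset.card_image_of_injective _ (add_left_injective _)
    have hAB : (A + B).card = A.card + 1 := by omega
    have hUcard : (C1 ∪ C2).card ≤ A.card + 1 := le_trans (Finset.card_le_card hsub) (le_of_eq hAB)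
    have hinter : A.card ≤ (C1 ∩ C2).card + 1 := by
      have := Finset.card_union_add_card_inter C1 C2
      omega
    set T := A.filter (fun x => x - d ∈ A) with hT
    have hTcard : (C1 ∩ C2).card ≤ T.card := by
      apply Finset.card_le_card_of_injOn (fun x => x - b1)
      · intro x hx
        obtain ⟨hx1, hx2⟩ := Finset.mem_inter.mp hx
        obtain ⟨a, ha, rfl⟩ := Finset.mem_image.mp hx1
        obtain ⟨a', ha', heq'⟩ := Finset.mem_image.mp hx2
        simp only [Finset.mem_coe, hT, Finset.mem_filter]
        constructor
        · simpa using ha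
        · have : a + b1 - b1 - d = a' := by omega
          rwa [this]
      · intro x _ y _ hxy
        dsimp at hxy
        omega
    have hmnT : A.min' hAne ∉ T := by
      rw [hT, Finset.mem_filter]
      rintro ⟨-, h2⟩
      have := A.min'_le _ h2
      omega
    have hTsub : T ⊆ A.erase (A.min' hAne) := by
      intro x hx
      rcases Finset.mem_filter.mp hx with ⟨hx1, -⟩
      exact Finset.mem_erase.mpr ⟨fun hcon => hmnT (hcon ▸ hx), hx1⟩
    have hTeq : T = A.erase (A.min' hAne) := by
      apply Finset.eq_of_subset_of_card_le hTsub
      rw [Finset.card_erase_of_mem (A.min'_mem hAne)]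
      omega
    have hstep : ∀ x ∈ A, x ≠ A.min' hAne → x - d ∈ A := by
      intro x hx hne
      have : x ∈ T := hTeq ▸ Finset.mem_erase.mpr ⟨hne, hx⟩
      exact (Finset.mem_filter.mp this).2
    refine ⟨d, hd, ap_of_step A.card A hAne d hd rfl hstep, ?_⟩
    -- B = {b1, b2} = apInt b1 d 2
    have hpair : ({b1, b2} : Finset ℤ) ⊆ B := by
      intro x hx
      rcases Finset.mem_insert.mp hx with rfl | hx
      · exact B.min'_mem hBne
      · rw [Finset.mem_singleton.mp hx]; exact B.max'_mem hBne
    have hBeq : B = {b1, b2} := by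
      symm
      apply Finset.eq_of_subset_of_card_le hpair
      rw [Finset.card_insert_of_notMem (by simp; omega), Finset.card_singleton]
      omega
    have hcard2' : B.card = 2 := by omega
    rw [hcard2', hBeq]
    ext x
    rw [mem_apInt]
    simp only [Finset.mem_insert, Finset.mem_singleton]
    constructor
    · rintro (rfl | rfl)
      · exact ⟨0, by omega, by push_cast; ring⟩
      · exact ⟨1, by omega, by push_cast; omega⟩
    · rintro ⟨i, hi, rfl⟩
      interval_cases i
      · left; push_cast; ring
      · right; push_cast; omega
  · -- step case n ≥ 3
    set bmax := B.max' hBne with hbmax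
    set B' := B.erase bmax with hB'
    have hbmaxB : bmax ∈ B := B.max'_mem hBne
    have hB'card : B'.card = n - 1 := by
      rw [hB', Finset.card_erase_of_mem hbmaxB, hBn]
    have hB'2 : 2 ≤ B'.card := by omega
    have hB'ne : B'.Nonempty := Finset.card_pos.mp (by omega)
    have hB'sub : B' ⊆ B := Finset.erase_subset _ _
    have hABsub : A + B' ⊆ A + B := Finset.add_subset_add_left hB'sub
    have hy1 : A.max' hAne + bmax ∈ A + B := Finset.add_mem_add (A.max'_mem hAne) hbmaxB
    have hy1not : A.max' hAne + bmax ∉ A + B' := by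
      intro hcon
      rw [Finset.mem_add] at hcon
      obtain ⟨a, ha, b, hb, habeq⟩ := hcon
      have h1 := A.le_max' a ha
      have h2 : b < bmax := lt_of_le_of_ne (B.le_max' b (hB'sub hb)) (Finset.mem_erase.mp hb).1
      omega
    have hABcard : (A + B).card = A.card + n - 1 := by omega
    have hub : (A + B').card + 1 ≤ (A + B).card := by
      have : insert (A.max' hAne + bmax) (A + B') ⊆ A + B := by
        intro x hx
        rcases Finset.mem_insert.mp hx with rfl | hx
        · exact hy1
        · exact hABsub hx
      have h2 := Finset.card_le_card this
      rwa [Finset.card_insert_of_notMem hy1not] at h2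
    have hlb := card_add_card_le hAne hB'ne
    have heq' : (A + B').card + 1 = A.card + B'.card := by omega
    obtain ⟨d, hd, hAap, hB'ap⟩ := IH (n - 1) (by omega) A B' hA2 hB'2 hB'card heq'
    have hminB' : B'.min' hB'ne = B.min' hBne := by
      have hmem : B.min' hBne ∈ B' := by
        refine Finset.mem_erase.mpr ⟨?_, B.min'_mem hBne⟩
        have := Finset.min'_lt_max'_of_card B (by omega)
        omega
      apply le_antisymm (Finset.min'_le _ _ hmem)
      exact Finset.le_min' _ _ _ fun y hy => B.min'_le y (hB'sub hy)
    obtain ⟨kA, hkA⟩ : ∃ kA, A.card = kA := ⟨_, rfl⟩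
    obtain ⟨mn, hmn⟩ : ∃ mn, A.min' hAne = mn := ⟨_, rfl⟩
    obtain ⟨mB, hmB⟩ : ∃ mB, B.min' hBne = mB := ⟨_, rfl⟩
    obtain ⟨M, hM⟩ : ∃ M, A.max' hAne = M := ⟨_, rfl⟩
    rw [hminB', hmB, hB'card] at hB'ap
    rw [hmn, hkA] at hAap
    rw [hM] at hy1 hy1not
    have hkA2 : 2 ≤ kA := by omega
    -- A + B' is an AP
    have hAB'ap : A + B' = apInt (mn + mB) d (kA + (n - 1) - 1) := by
      rw [hAap, hB'ap, apInt_add_apInt (by omega) (by omega)]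
    -- M = mn + (kA - 1) * d
    have hmaxA : M = mn + ((kA - 1 : ℕ) : ℤ) * d := by
      have h1 : M ∈ A := hM ▸ A.max'_mem hAne
      rw [hAap, mem_apInt] at h1
      obtain ⟨i, hi, hieq⟩ := h1
      have h2 : mn + ((kA - 1 : ℕ) : ℤ) * d ∈ A := by
        rw [hAap, mem_apInt]; exact ⟨kA - 1, by omega, rfl⟩
      have h3 : mn + ((kA - 1 : ℕ) : ℤ) * d ≤ M := hM ▸ A.le_max' _ h2
      rw [hieq] at h3
      have h4 : ((kA - 1 : ℕ) : ℤ) * d ≤ (i : ℤ) * d := by omega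
      have hii : ((kA - 1 : ℕ) : ℤ) ≤ (i : ℤ) := le_of_mul_le_mul_right h4 hd
      have h5 : i = kA - 1 := by omega
      subst h5; exact hieq
    have hy2A : mn + ((kA - 2 : ℕ) : ℤ) * d ∈ A := by
      rw [hAap, mem_apInt]; exact ⟨kA - 2, by omega, rfl⟩
    have hy2 : mn + ((kA - 2 : ℕ) : ℤ) * d + bmax ∈ A + B := Finset.add_mem_add hy2A hbmaxB
    have hy1y2 : M + bmax ≠ mn + ((kA - 2 : ℕ) : ℤ) * d + bmax := by
      rw [hmaxA]
      have h6 : ((kA - 2 : ℕ) : ℤ) < ((kA - 1 : ℕ) : ℤ) := by omega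
      nlinarith
    have hy2mem : mn + ((kA - 2 : ℕ) : ℤ) * d + bmax ∈ A + B' := by
      by_contra hcon
      have hsub2 : insert (M + bmax)
          (insert (mn + ((kA - 2 : ℕ) : ℤ) * d + bmax) (A + B')) ⊆ A + B := by
        intro x hx
        rcases Finset.mem_insert.mp hx with rfl | hx
        · exact hy1
        rcases Finset.mem_insert.mp hx with rfl | hx
        · exact hy2
        · exact hABsub hx
      have hcards := Finset.card_le_card hsub2
      rw [Finset.card_insert_of_notMem, Finset.card_insert_of_notMem hcon] at hcards
      · omega
      · simp only [Finset.mem_insert]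
        push_neg
        exact ⟨hy1y2, hy1not⟩
    rw [hAB'ap, mem_apInt] at hy2mem
    obtain ⟨j, hj, hjeq⟩ := hy2mem
    have hbmaxtop : mB + ((n - 2 : ℕ) : ℤ) * d < bmax := by
      have h1 : mB + ((n - 2 : ℕ) : ℤ) * d ∈ B' := by
        rw [hB'ap, mem_apInt]; exact ⟨n - 2, by omega, rfl⟩
      have h2 : mB + ((n - 2 : ℕ) : ℤ) * d ≠ bmax := fun hcon =>
        (Finset.mem_erase.mp h1).1 hcon
      exact lt_of_le_of_ne (B.le_max' _ (hB'sub h1)) h2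
    obtain ⟨t, ht⟩ : ∃ t : ℤ, t = (j : ℤ) - ((kA - 2 : ℕ) : ℤ) := ⟨_, rfl⟩
    have hbm : bmax = mB + t * d := by
      have h7 : t * d = (j : ℤ) * d - ((kA - 2 : ℕ) : ℤ) * d := by rw [ht]; ring
      omega
    have htlb : ((n - 2 : ℕ) : ℤ) < t := by
      have h8 : ((n - 2 : ℕ) : ℤ) * d < t * d := by omega
      exact lt_of_mul_lt_mul_right h8 (le_of_lt hd)
    have htub : t ≤ ((n - 1 : ℕ) : ℤ) := by omega
    have htval : t = ((n - 1 : ℕ) : ℤ) := by omega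
    have hbmval : bmax = mB + ((n - 1 : ℕ) : ℤ) * d := by rw [hbm, htval]
    refine ⟨d, hd, by simp only [hmn, hkA]; exact hAap, ?_⟩
    have hins : B = insert bmax B' := (Finset.insert_erase hbmaxB).symm
    simp only [hmB, hBn]
    rw [hins]
    ext x
    rw [Finset.mem_insert, hB'ap, mem_apInt, mem_apInt]
    constructor
    · rintro (rfl | ⟨i, hi, rfl⟩)
      · exact ⟨n - 1, by omega, by rw [hbmval]⟩
      · exact ⟨i, by omega, rfl⟩
    · rintro ⟨i, hi, rfl⟩
      rcases Nat.lt_or_ge i (n - 1) with h | h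
      · exact Or.inr ⟨i, h, rfl⟩
      · have : i = n - 1 := by omega
        subst this
        exact Or.inl (by rw [hbmval])

lemma card_itSum_ge {A : Finset ℤ} (hA : A.Nonempty) :
    ∀ h, 1 ≤ h → h * (A.card - 1) + 1 ≤ (itSum h A).card := by
  intro h
  induction h with
  | zero => omega
  | succ h ih =>
      intro _
      rcases Nat.eq_zero_or_pos h with rfl | hh
      · have h1 := card_add_card_le hA (itSum_nonempty hA 0)
        have h2 : (itSum 0 A).card = 1 := by simp [itSum]
        have h4 : 1 ≤ A.card := Finset.card_pos.mpr hA
        rw [itSum_succ]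
        omega
      · have h1 := card_add_card_le hA (itSum_nonempty hA h)
        have h2 := ih hh
        rw [itSum_succ]
        have h3 : (h + 1) * (A.card - 1) = h * (A.card - 1) + (A.card - 1) := by ring
        have h4 : 1 ≤ A.card := Finset.card_pos.mpr hA
        omega

lemma single_inverse {A : Finset ℤ} {k h : ℕ} (hk : A.card = k) (hk2 : 2 ≤ k)
    (hh : 2 ≤ h) (hcard : (itSum h A).card = h * (k - 1) + 1) :
    ∃ d : ℤ, 0 < d ∧ A = apInt (A.min' (Finset.card_pos.mp (by omega))) d k := by
  have hAne : A.Nonempty := Finset.card_pos.mp (by omega)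
  obtain ⟨h', rfl⟩ : ∃ h', h = h' + 1 := ⟨h - 1, by omega⟩
  have hh' : 1 ≤ h' := by omega
  have hBne : (itSum h' A).Nonempty := itSum_nonempty hAne h'
  have hBc : h' * (k - 1) + 1 ≤ (itSum h' A).card := by
    have h9 := card_itSum_ge hAne h' hh'
    rwa [hk] at h9
  have hK := card_add_card_le hAne hBne
  rw [← itSum_succ, hcard, hk] at hK
  have hexp : (h' + 1) * (k - 1) = h' * (k - 1) + (k - 1) := by ring
  have hBcard : (itSum h' A).card = h' * (k - 1) + 1 := by omega
  have hB2 : 2 ≤ (itSum h' A).card := by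
    have h15 : 1 ≤ h' * (k - 1) := Nat.one_le_iff_ne_zero.mpr (by
      have : 1 ≤ k - 1 := by omega
      positivity)
    omega
  have heq2 : (A + itSum h' A).card + 1 = A.card + (itSum h' A).card := by
    rw [← itSum_succ, hcard, hk, hBcard]
    omega
  obtain ⟨d, hd, hAap, -⟩ := pair_eq (itSum h' A).card A (itSum h' A) (by omega) hB2 rfl heq2
  simp only [hk] at hAap
  exact ⟨d, hd, hAap⟩

lemma natAP (H : Finset ℕ) (hH : H.Nonempty) (d : ℕ) (hd : 0 < d)
    (hstep : ∀ h ∈ H, h ≠ H.max' hH → h + d ∈ H) :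
    H = (Finset.range H.card).image (fun i => H.min' hH + i * d) := by
  set hr := H.max' hH with hhr
  set h1 := H.min' hH with hh1
  have claim1 : ∀ n, ∀ h ∈ H, hr - h ≤ n → d ∣ (hr - h) := by
    intro n
    induction n with
    | zero => intro h _ hle; have : hr - h = 0 := by omega
              rw [this]; exact dvd_zero d
    | succ n ihn =>
        intro h hh hle
        rcases eq_or_ne h hr with rfl | hne
        · simp
        · have h2 : h + d ∈ H := hstep h hh hne
          have h3 : h + d ≤ hr := H.le_max' _ h2
          have h4 : hr - (h + d) ≤ n := by omega
          obtain ⟨c, hc⟩ := ihn (h + d) h2 h4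
          refine ⟨c + 1, ?_⟩
          have h10 : d * (c + 1) = d * c + d := by ring
          omega
  have claim2 : ∀ j, h1 + j * d ≤ hr → h1 + j * d ∈ H := by
    intro j
    induction j with
    | zero => intro _; simpa using H.min'_mem hH
    | succ j ihj =>
        intro hle
        have h5 : h1 + j * d ≤ hr := by
          have : (j + 1) * d = j * d + d := by ring
          omega
        have h6 : h1 + j * d ∈ H := ihj h5
        have h7 : h1 + j * d ≠ hr := by
          have : (j + 1) * d = j * d + d := by ring
          omega
        have := hstep _ h6 h7
        have h8 : h1 + j * d + d = h1 + (j + 1) * d := by ring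
        rwa [h8] at this
  have hh1r : h1 ≤ hr := H.min'_le _ (H.max'_mem hH)
  have hdvd1 : d ∣ hr - h1 := claim1 (hr - h1) h1 (H.min'_mem hH) le_rfl
  obtain ⟨s, hs⟩ := hdvd1
  have hTsub : (Finset.range (s + 1)).image (fun i => h1 + i * d) ⊆ H := by
    intro x hx
    obtain ⟨i, hi, rfl⟩ := Finset.mem_image.mp hx
    rw [Finset.mem_range] at hi
    apply claim2
    have h11 : i * d ≤ s * d := Nat.mul_le_mul_right d (by omega)
    have h12 : d * s = s * d := Nat.mul_comm d s
    omega
  have hHsub : H ⊆ (Finset.range (s + 1)).image (fun i => h1 + i * d) := by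
    intro h hh
    have hle1 : h1 ≤ h := H.min'_le _ hh
    have hle2 : h ≤ hr := H.le_max' _ hh
    have hd1 : d ∣ hr - h := claim1 (hr - h) h hh le_rfl
    obtain ⟨c, hc⟩ := hd1
    have e1 : d * c = c * d := Nat.mul_comm d c
    have e2 : d * s = s * d := Nat.mul_comm d s
    have hcs : c ≤ s := by
      have h13 : c * d ≤ s * d := by omega
      exact Nat.le_of_mul_le_mul_right (by omega) hd
    refine Finset.mem_image.mpr ⟨s - c, Finset.mem_range.mpr (by omega), ?_⟩
    have h14 : (s - c) * d = s * d - c * d := Nat.sub_mul s c d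
    omega
  have hHT : H = (Finset.range (s + 1)).image (fun i => h1 + i * d) :=
    Finset.Subset.antisymm hHsub hTsub
  have hcard : H.card = s + 1 := by
    rw [hHT, Finset.card_image_of_injective _ ?_, Finset.card_range]
    intro i j hij
    simp only at hij
    have : i * d = j * d := by omega
    exact Nat.eq_of_mul_eq_mul_right hd this
  rw [hcard]
  exact hHT


lemma main_aux (k r : ℕ) (hk2 : 2 ≤ k) (hr2 : 2 ≤ r)
    (A : Finset ℤ) (H : Finset ℕ) (hAne : A.Nonempty) (hHne : H.Nonempty)
    (hApos : ∀ a ∈ A, 0 < a) (hHpos : ∀ h ∈ H, 0 < h)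
    (hk : A.card = k) (hrcard : H.card = r)
    (heq : (sumsetH H A).card = H.max' hHne * (k - 1) + r) :
    ∃ d : ℕ, IsAPNat H d ∧ IsAPInt A ((d : ℤ) * A.min' hAne) := by
  classical
  set m := A.min' hAne with hm0
  have hmpos : 0 < m := hApos _ (A.min'_mem hAne)
  set hr := H.max' hHne with hhr0
  have hhr1 : ∀ h ∈ H, h ≤ hr := fun h hh => H.le_max' h hh
  have hrmem : hr ∈ H := H.max'_mem hHne
  have hr2' : 2 ≤ hr := by
    have h1 := Finset.min'_lt_max'_of_card H (by omega : 1 < H.card)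
    have h2 := hHpos _ (H.min'_mem hHne)
    omega
  have hr1 : 1 ≤ hr := by omega
  set S := (H.erase hr).image (fun h : ℕ => (h : ℤ) * m) with hS
  have hSsub : S ⊆ sumsetH H A := by
    intro x hx
    obtain ⟨h, hh, rfl⟩ := Finset.mem_image.mp hx
    exact Finset.mem_biUnion.mpr
      ⟨h, Finset.mem_of_mem_erase hh, nsmul_mem_itSum (A.min'_mem hAne) h⟩
  have hTsub : itSum hr A ⊆ sumsetH H A := fun x hx => Finset.mem_biUnion.mpr ⟨hr, hrmem, hx⟩
  have hdisj : Disjoint S (itSum hr A) := by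
    rw [Finset.disjoint_left]
    rintro x hx hx2
    obtain ⟨h, hh, rfl⟩ := Finset.mem_image.mp hx
    have h1 : h < hr :=
      lt_of_le_of_ne (hhr1 h (Finset.mem_of_mem_erase hh)) (Finset.mem_erase.mp hh).1
    have h2 := le_of_mem_itSum hAne hr _ hx2
    rw [← hm0] at h2
    have h3 : (h : ℤ) * m < (hr : ℤ) * m := by
      have hc : (h : ℤ) < (hr : ℤ) := by exact_mod_cast h1
      exact mul_lt_mul_of_pos_right hc hmpos
    omega
  have hinj : Function.Injective (fun h : ℕ => (h : ℤ) * m) := by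
    intro a b hab
    simp only at hab
    have : (a : ℤ) = b := mul_right_cancel₀ (ne_of_gt hmpos) hab
    exact_mod_cast this
  have hScard : S.card = r - 1 := by
    rw [hS, Finset.card_image_of_injective _ hinj, Finset.card_erase_of_mem hrmem, hrcard]
  have hUsub : S ∪ itSum hr A ⊆ sumsetH H A := Finset.union_subset hSsub hTsub
  have hUcard : (S ∪ itSum hr A).card = (r - 1) + (itSum hr A).card := by
    rw [Finset.card_union_of_disjoint hdisj, hScard]
  have hlow := card_itSum_ge hAne hr hr1
  rw [hk] at hlow
  have hle := Finset.card_le_card hUsub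
  rw [heq] at hle
  have hTcard : (itSum hr A).card = hr * (k - 1) + 1 := by omega
  have hUeq : S ∪ itSum hr A = sumsetH H A :=
    Finset.eq_of_subset_of_card_le hUsub (by omega)
  obtain ⟨e, he, hAap⟩ := single_inverse hk hk2 hr2' hTcard
  have hAap' : A = apInt m e k := hAap
  have hform : ∀ h : ℕ, itSum h A = apInt ((h : ℤ) * m) e (h * (k - 1) + 1) := by
    intro h
    rw [hAap']
    exact itSum_apInt (by omega) h
  have key : ∀ h ∈ H, h ≠ hr → ∃ h' ∈ H, h < h' ∧ e = ((h' : ℤ) - (h : ℤ)) * m := by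
    intro h hh hne
    have hpos : 1 ≤ h := hHpos h hh
    have hlt : h < hr := lt_of_le_of_ne (hhr1 h hh) hne
    have hlt' : (h : ℤ) < (hr : ℤ) := by exact_mod_cast hlt
    have hx : (h : ℤ) * m + e ∈ itSum h A := by
      rw [hform h, mem_apInt]
      refine ⟨1, ?_, by push_cast; ring⟩
      have : 0 < h * (k - 1) := Nat.mul_pos (by omega) (by omega)
      omega
    have hmem : (h : ℤ) * m + e ∈ sumsetH H A := Finset.mem_biUnion.mpr ⟨h, hh, hx⟩
    rw [← hUeq] at hmem
    rcases Finset.mem_union.mp hmem with hmem | hmem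
    · obtain ⟨h', hh', heq2'⟩ := Finset.mem_image.mp hmem
      have heq2 : (h' : ℤ) * m = (h : ℤ) * m + e := heq2'
      have he2 : e = ((h' : ℤ) - (h : ℤ)) * m := by
        have hr2'' : ((h' : ℤ) - (h : ℤ)) * m = (h' : ℤ) * m - (h : ℤ) * m := by ring
        omega
      refine ⟨h', Finset.mem_of_mem_erase hh', ?_, he2⟩
      have hp : 0 < ((h' : ℤ) - (h : ℤ)) * m := he2 ▸ he
      have : (h : ℤ) < (h' : ℤ) := by nlinarith
      exact_mod_cast this
    · rw [hform hr, mem_apInt] at hmem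
      obtain ⟨t, ht, hteq⟩ := hmem
      rcases Nat.eq_zero_or_pos t with rfl | htpos
      · refine ⟨hr, hrmem, hlt, ?_⟩
        have hr3 : ((hr : ℤ) - (h : ℤ)) * m = (hr : ℤ) * m - (h : ℤ) * m := by ring
        push_cast at hteq
        omega
      · exfalso
        have ht1 : (1 : ℤ) ≤ (t : ℤ) := by exact_mod_cast htpos
        nlinarith [mul_pos (sub_pos.mpr hlt') hmpos]
  have hminH : H.min' hHne ≠ hr := by
    have := Finset.min'_lt_max'_of_card H (by omega : 1 < H.card)
    omega
  obtain ⟨h0, hh0, hlt0, he0⟩ := key _ (H.min'_mem hHne) hminH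
  obtain ⟨dd, hdd⟩ : ∃ dd, h0 - H.min' hHne = dd := ⟨_, rfl⟩
  have hddpos : 0 < dd := by omega
  have hedm : e = (dd : ℤ) * m := by
    rw [he0]
    congr 1
    omega
  have hstepH : ∀ h ∈ H, h ≠ hr → h + dd ∈ H := by
    intro h hh hne
    obtain ⟨h', hh', hlt', he'⟩ := key h hh hne
    have h5 : ((h' : ℤ) - (h : ℤ)) * m = (dd : ℤ) * m := by rw [← he', ← hedm]
    have h6 : ((h' : ℤ) - (h : ℤ)) = (dd : ℤ) := mul_right_cancel₀ (ne_of_gt hmpos) h5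
    have h7 : h' = h + dd := by omega
    rwa [← h7]
  have hHap := natAP H hHne dd hddpos hstepH
  refine ⟨dd, ⟨H.min' hHne, hHap⟩, ⟨m, ?_⟩⟩
  rw [hk, ← hedm]
  exact hAap'

end SCI

theorem sumset_card_inverse (k r : ℕ) (hk2 : 2 ≤ k) (hr2 : 2 ≤ r)
    (A : Finset ℤ) (H : Finset ℕ)
    (hApos : ∀ a ∈ A, 0 < a) (hHpos : ∀ h ∈ H, 0 < h)
    (hk : A.card = k) (hrcard : H.card = r)
    (heq : (sumsetH H A).card
      = H.max' (Finset.card_pos.mp (by omega)) * (k - 1) + r) :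
    ∃ d : ℕ, IsAPNat H d ∧
      IsAPInt A ((d : ℤ) * A.min' (Finset.card_pos.mp (by omega))) := by
  have hHne : H.Nonempty := Finset.card_pos.mp (by omega)
  have hAne : A.Nonempty := Finset.card_pos.mp (by omega)
  exact SCI.main_aux k r hk2 hr2 A H hAne hHne hApos hHpos hk hrcard heq
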